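/- arXiv:1505.05296 — 3 statements merged into one kernel-verified Lean document; each statement's English description precedes it below -/
import Mathlib

section
/- Under the Setup, let C̄ denote the closure of C and C* its adjoint. Then for every p and every x ∈ V_p: x belongs to Dom(C* C̄), and C* C̄ x = C'_m C_m x = C'_p C_p x for every m ≥ p; in particular each V_p is invariant under C* C̄, and the operator G := -(1/2) C* C̄ agrees on V_p with the bounded operator G_p := -(1/2) C'_p C_p. -/
/-- Same setup as Statement 1 (in particular `T` is the densely defined operator `C`, with closure
`C̄ = T.closure` and adjoint `C* = T.adjoint`).  Then for every `p` and every `x ∈ V p`: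
`x` belongs to `Dom(C* C̄)` (i.e. `x ∈ Dom(C̄)` and `C̄ x ∈ Dom(C*)`), and
`C* C̄ x = C'_m C_m x = C'_p C_p x` for every `m ≥ p`; in particular each `V p` is invariant
under `C* C̄`, and the operator `G := -(1/2) C* C̄` agrees on `V p` with the bounded operator
`G_p := -(1/2) C'_p C_p`. -/
theorem stmt_2
    {H : Type*} [NormedAddCommGroup H] [InnerProductSpace ℂ H] [CompleteSpace H]
    (V : ℕ → Submodule ℂ H)
    (hfin : ∀ n, FiniteDimensional ℂ (V n))
    (hmono : ∀ m n, m ≤ n → V m ≤ V n)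
    (C : ℕ → H →L[ℂ] H)
    (hCinv : ∀ n, ∀ x ∈ V n, C n x ∈ V n)
    (hCcomp : ∀ p m, p ≤ m → ∀ x ∈ V p, C m x = C p x)
    (C' : ℕ → H →L[ℂ] H)
    (hC'inv : ∀ n, ∀ x ∈ V n, C' n x ∈ V n)
    (hC'comp : ∀ p m, p ≤ m → ∀ x ∈ V p, C' m x = C' p x)
    (hadj : ∀ n, C' n = ContinuousLinearMap.adjoint (C n))
    (T : H →ₗ.[ℂ] H)
    (hTdom : ∀ x : H, x ∈ T.domain ↔ ∃ n, x ∈ V n)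
    (hdense : Dense (T.domain : Set H))
    (hT : ∀ n, ∀ x ∈ V n, ∀ hx : x ∈ T.domain, T ⟨x, hx⟩ = C n x) :
    ∀ p, ∀ x ∈ V p,
      ∃ (hx : x ∈ T.closure.domain) (hy : T.closure ⟨x, hx⟩ ∈ T.adjoint.domain),
        (∀ m, p ≤ m →
          T.adjoint ⟨T.closure ⟨x, hx⟩, hy⟩ = C' m (C m x) ∧
          C' m (C m x) = C' p (C p x)) ∧
        -- each `V p` is invariant under `C* C̄`
        T.adjoint ⟨T.closure ⟨x, hx⟩, hy⟩ ∈ V p ∧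
        -- `G = -(1/2) C* C̄` agrees on `V p` with `G_p = -(1/2) C'_p C_p`
        (-(1 / 2 : ℂ)) • T.adjoint ⟨T.closure ⟨x, hx⟩, hy⟩ =
          ((-(1 / 2 : ℂ)) • ((C' p).comp (C p))) x := by
  intro p x hxV
  have hxT : x ∈ T.domain := (hTdom x).2 ⟨p, hxV⟩
  have hx : x ∈ T.closure.domain := T.le_closure.1 hxT
  have hclo : T.closure ⟨x, hx⟩ = C p x := by
    rw [← T.le_closure.2 (x := ⟨x, hxT⟩) (y := ⟨x, hx⟩) rfl]
    exact hT p x hxV hxT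
  -- key lemma: any y ∈ V n is in adjoint domain with value C' n y
  have key : ∀ n, ∀ y ∈ V n, ∀ u : T.domain,
      inner ℂ (C' n y) (u : H) = (inner ℂ y (T u) : ℂ) := by
    intro n y hyV u
    obtain ⟨k, hk⟩ := (hTdom (u : H)).1 u.2
    have hku : T u = C k (u : H) := hT k _ hk u.2
    set m := max n k with hm
    have h1 : C' m y = C' n y := hC'comp n m (le_max_left n k) y hyV
    have h2 : C m (u : H) = C k (u : H) :=
      hCcomp k m (le_max_right n k) _ hk
    calc inner ℂ (C' n y) (u : H) = inner ℂ (C' m y) (u : H) := by rw [h1]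
      _ = inner ℂ ((ContinuousLinearMap.adjoint (C m)) y) (u : H) := by rw [hadj m]
      _ = inner ℂ y (C m (u : H)) := ContinuousLinearMap.adjoint_inner_left _ _ _
      _ = inner ℂ y (T u) := by rw [h2, hku]
  have hCpx : C p x ∈ V p := hCinv p x hxV
  have hy : T.closure ⟨x, hx⟩ ∈ T.adjoint.domain := by
    rw [hclo]
    exact LinearPMap.mem_adjoint_domain_of_exists _
      ⟨C' p (C p x), fun u => key p (C p x) hCpx u⟩
  have hadjval : T.adjoint ⟨T.closure ⟨x, hx⟩, hy⟩ = C' p (C p x) := by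
    refine LinearPMap.adjoint_apply_eq hdense _ fun u => ?_
    simpa only [hclo] using key p (C p x) hCpx u
  have hmeq : ∀ m, p ≤ m → C' m (C m x) = C' p (C p x) := by
    intro m hpm
    rw [hCcomp p m hpm x hxV, hC'comp p m hpm _ hCpx]
  refine ⟨hx, hy, fun m hpm => ⟨by rw [hadjval, hmeq m hpm], hmeq m hpm⟩, ?_, ?_⟩
  · rw [hadjval]; exact hC'inv p _ hCpx
  · rw [hadjval]; simp
end

section
/- Under the Setup, the subspace D = ⋃_n V_n is a core for the operator G := -(1/2) C* C̄ (with domain Dom(C* C̄)); that is, D ⊆ Dom(G) and the closure of the restriction of G to D equals G. -/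
open Filter Topology

section Aux

variable {H : Type*} [NormedAddCommGroup H] [InnerProductSpace ℂ H]

local notation "⟪" x ", " y "⟫" => @inner ℂ _ _ x y

/-- If `y` is orthogonal to a dense set, then `y = 0`. -/
lemma aux_eq_zero {s : Set H} (hs : Dense s) {y : H} (h : ∀ u ∈ s, ⟪y, u⟫ = 0) : y = 0 := by
  have hc : Continuous fun u : H => ⟪y, u⟫ := continuous_const.inner continuous_id
  have hall : (fun u : H => ⟪y, u⟫) = fun _ => (0 : ℂ) :=
    Continuous.ext_on hs hc continuous_const (fun x hx => h x hx)
  have := congrFun hall y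
  simpa [inner_self_eq_zero] using this

/-- Extract an approximating sequence from membership in the closure of the graph. -/
lemma aux_graph_seq {A : H →ₗ.[ℂ] H} {p : H × H} (hp : p ∈ closure (A.graph : Set (H × H))) :
    ∃ v : ℕ → A.domain, Tendsto (fun k => ((v k : H))) atTop (𝓝 p.1) ∧
      Tendsto (fun k => A (v k)) atTop (𝓝 p.2) := by
  obtain ⟨u, hu, hul⟩ := mem_closure_iff_seq_limit.mp hp
  choose v hv1 hv2 using fun k => A.mem_graph_iff.mp (hu k)
  refine ⟨v, ?_, ?_⟩
  · have h1 : Tendsto (fun k => (u k).1) atTop (𝓝 p.1) := (continuous_fst.tendsto p).comp hul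
    convert h1 using 2 with k
    exact (hv1 k)
  · have h2 : Tendsto (fun k => (u k).2) atTop (𝓝 p.2) := (continuous_snd.tendsto p).comp hul
    convert h2 using 2 with k
    exact (hv2 k)

/-- A criterion for closability in terms of a "weak formal adjoint" defined on a dense set. -/
lemma aux_isClosable [CompleteSpace H] {A : H →ₗ.[ℂ] H} {s : Set H} (hs : Dense s)
    (h : ∀ y ∈ s, ∃ w : H, ∀ x : A.domain, ⟪A x, y⟫ = ⟪(x : H), w⟫) : A.IsClosable := by
  refine ⟨A.graph.topologicalClosure.toLinearPMap,
    (Submodule.toLinearPMap_graph_eq _ ?_).symm⟩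
  rintro ⟨x, yv⟩ hxy hx0
  simp only at hx0 ⊢
  subst hx0
  have hcl : ((0 : H), yv) ∈ closure (A.graph : Set (H × H)) := by
    rwa [← Submodule.topologicalClosure_coe, SetLike.mem_coe]
  obtain ⟨v, hv1, hv2⟩ := aux_graph_seq hcl
  refine aux_eq_zero hs fun u hu => ?_
  obtain ⟨w, hw⟩ := h u hu
  have l1 : Tendsto (fun k => ⟪A (v k), u⟫) atTop (𝓝 ⟪yv, u⟫) :=
    hv2.inner tendsto_const_nhds
  have l2 : Tendsto (fun k => ⟪A (v k), u⟫) atTop (𝓝 (0 : ℂ)) := by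
    have : Tendsto (fun k => ⟪((v k : H)), w⟫) atTop (𝓝 ⟪(0 : H), w⟫) :=
      hv1.inner tendsto_const_nhds
    simp only [inner_zero_left] at this
    refine this.congr fun k => (hw (v k)).symm
  exact tendsto_nhds_unique l1 l2

/-- Membership in the domain of the closure from an approximating sequence. -/
lemma aux_mem_closure {A : H →ₗ.[ℂ] H} (hA : A.IsClosable) {x y : H} (v : ℕ → A.domain)
    (h1 : Tendsto (fun k => ((v k : H))) atTop (𝓝 x))
    (h2 : Tendsto (fun k => A (v k)) atTop (𝓝 y)) :
    ∃ hx : x ∈ A.closure.domain, A.closure ⟨x, hx⟩ = y := by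
  have hg : (x, y) ∈ A.closure.graph := by
    rw [← hA.graph_closure_eq_closure_graph, ← SetLike.mem_coe,
      Submodule.topologicalClosure_coe]
    refine mem_closure_of_tendsto (h1.prodMk_nhds h2) ?_
    filter_upwards with k using A.mem_graph (v k)
  obtain ⟨z, hz1, hz2⟩ := A.closure.mem_graph_iff.mp hg
  have hz1' : (z : H) = x := hz1
  have hmem : x ∈ A.closure.domain := hz1' ▸ z.2
  refine ⟨hmem, ?_⟩
  have : (⟨x, hmem⟩ : A.closure.domain) = z := Subtype.ext hz1'.symm
  rw [this, hz2]

/-- Approximating sequence for an element of the domain of the closure. -/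
lemma aux_closure_seq {A : H →ₗ.[ℂ] H} (hA : A.IsClosable) (x : A.closure.domain) :
    ∃ v : ℕ → A.domain, Tendsto (fun k => ((v k : H))) atTop (𝓝 (x : H)) ∧
      Tendsto (fun k => A (v k)) atTop (𝓝 (A.closure x)) := by
  have hp : ((x : H), A.closure x) ∈ closure (A.graph : Set (H × H)) := by
    rw [← Submodule.topologicalClosure_coe, SetLike.mem_coe,
      hA.graph_closure_eq_closure_graph]
    exact A.closure.mem_graph x
  exact aux_graph_seq hp

end Aux

local notation "⟪" x ", " y "⟫" => @inner ℂ _ _ x y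

set_option maxHeartbeats 2000000


/-- Same setup as Statement 1 (in particular `T` is the densely defined operator `C`, with closure
`C̄ = T.closure` and adjoint `C* = T.adjoint`), and `S` is the operator `G := -(1/2) C* C̄`
with domain `Dom(C* C̄)`.  Then the subspace `D = ⋃ n, V n` is a core for `G`; that is,
`D ⊆ Dom(G)` and the closure of the restriction of `G` to `D` equals `G`. -/
theorem stmt_3
    {H : Type*} [NormedAddCommGroup H] [InnerProductSpace ℂ H] [CompleteSpace H]
    (V : ℕ → Submodule ℂ H)
    (hfin : ∀ n, FiniteDimensional ℂ (V n))
    (hmono : ∀ m n, m ≤ n → V m ≤ V n)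
    (C : ℕ → H →L[ℂ] H)
    (hCinv : ∀ n, ∀ x ∈ V n, C n x ∈ V n)
    (hCcomp : ∀ p m, p ≤ m → ∀ x ∈ V p, C m x = C p x)
    (C' : ℕ → H →L[ℂ] H)
    (hC'inv : ∀ n, ∀ x ∈ V n, C' n x ∈ V n)
    (hC'comp : ∀ p m, p ≤ m → ∀ x ∈ V p, C' m x = C' p x)
    (hadj : ∀ n, C' n = ContinuousLinearMap.adjoint (C n))
    (T : H →ₗ.[ℂ] H)
    (hTdom : ∀ x : H, x ∈ T.domain ↔ ∃ n, x ∈ V n)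
    (hdense : Dense (T.domain : Set H))
    (hT : ∀ n, ∀ x ∈ V n, ∀ hx : x ∈ T.domain, T ⟨x, hx⟩ = C n x)
    -- `S` is the operator `G = -(1/2) C* C̄` with domain `Dom(C* C̄)`
    (S : H →ₗ.[ℂ] H)
    (hSdom : ∀ x : H,
      x ∈ S.domain ↔ ∃ hx : x ∈ T.closure.domain, T.closure ⟨x, hx⟩ ∈ T.adjoint.domain)
    (hSval : ∀ (x : H) (hxS : x ∈ S.domain) (hx : x ∈ T.closure.domain)
      (hy : T.closure ⟨x, hx⟩ ∈ T.adjoint.domain),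
      S ⟨x, hxS⟩ = (-(1 / 2 : ℂ)) • T.adjoint ⟨T.closure ⟨x, hx⟩, hy⟩) :
    -- `D ⊆ Dom(G)`
    (∀ n, ∀ x ∈ V n, x ∈ S.domain) ∧
    -- the closure of the restriction of `G` to `D` equals `G`
    (S.domRestrict (⨆ n, V n)).closure = S := by
  classical
  -- basic notation
  set Φ : ℕ → H → H := fun n x => (-(1 / 2 : ℂ)) • (C' n (C n x)) with hΦdef
  have hconj : (starRingEnd ℂ) (-(1 / 2 : ℂ)) = -(1 / 2 : ℂ) := by
    rw [map_neg, map_div₀, map_one, map_ofNat]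
  have hΦmem : ∀ n, ∀ x ∈ V n, Φ n x ∈ V n := fun n x hx =>
    Submodule.smul_mem _ _ (hC'inv n _ (hCinv n x hx))
  have hΦcomp : ∀ p m, p ≤ m → ∀ x ∈ V p, Φ m x = Φ p x := by
    intro p m hpm x hx
    simp only [hΦdef]
    rw [hCcomp p m hpm x hx, hC'comp p m hpm _ (hCinv p x hx)]
  -- inner product identities
  have hCC' : ∀ n (x y : H), ⟪x, C' n y⟫ = ⟪C n x, y⟫ := by
    intro n x y
    rw [hadj n]
    exact ContinuousLinearMap.adjoint_inner_right (C n) x y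
  have hC'C : ∀ n (x y : H), ⟪C' n x, y⟫ = ⟪x, C n y⟫ := by
    intro n x y
    rw [hadj n]
    exact ContinuousLinearMap.adjoint_inner_left (C n) y x
  have hΦpair : ∀ n (x y : H), ⟪Φ n x, y⟫ = ⟪x, Φ n y⟫ := by
    intro n x y
    simp only [hΦdef, inner_smul_left, inner_smul_right, hconj]
    rw [hC'C, hCC' n x (C n y)]
  -- D = ⨆ n, V n
  have hmonot : Monotone V := fun a b h => hmono a b h
  have hdir : Directed (· ≤ ·) V := hmonot.directed_le
  have hD : ∀ x : H, x ∈ (⨆ n, V n) ↔ ∃ n, x ∈ V n := fun x =>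
    Submodule.mem_iSup_of_directed V hdir
  have hTmem : ∀ {n x}, x ∈ V n → x ∈ T.domain := fun {n x} hx => (hTdom x).2 ⟨n, hx⟩
  -- adjoint values on D
  have hadjkey : ∀ n x, x ∈ V n → ∀ u : T.domain, ⟪C' n (C n x), (u : H)⟫ = ⟪C n x, T u⟫ := by
    intro n x hx u
    obtain ⟨m, hum⟩ := (hTdom u).1 u.2
    set k := max n m with hk
    have hxk : C n x ∈ V k := hmono n k (le_max_left n m) (hCinv n x hx)
    have hTu : T u = C k (u : H) := by
      have h1 := hT m u hum u.2
      rw [h1, hCcomp m k (le_max_right n m) _ hum]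
    rw [hTu, ← hC'comp n k (le_max_left n m) (C n x) (hCinv n x hx), hC'C]
  have hadjval : ∀ n x (hx : x ∈ V n), ∃ hm : C n x ∈ T.adjoint.domain,
      T.adjoint ⟨C n x, hm⟩ = C' n (C n x) := by
    intro n x hx
    have hm : C n x ∈ T.adjoint.domain :=
      LinearPMap.mem_adjoint_domain_of_exists _ ⟨C' n (C n x), hadjkey n x hx⟩
    exact ⟨hm, LinearPMap.adjoint_apply_eq hdense ⟨C n x, hm⟩ (hadjkey n x hx)⟩
  -- T is closable
  have hTclosable : T.IsClosable := by
    refine aux_isClosable hdense fun y hy => ?_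
    obtain ⟨m, hym⟩ := (hTdom y).1 hy
    refine ⟨C' m y, fun u => ?_⟩
    obtain ⟨a, hua⟩ := (hTdom (u : H)).1 u.2
    set k := max m a with hk
    have hTu : T u = C k (u : H) := by
      rw [hT a u hua u.2, hCcomp a k (le_max_right m a) _ hua]
    rw [hTu, ← hC'comp m k (le_max_left m a) y hym, hCC']
  -- part 1 : D ⊆ Dom S, with values
  have part1 : ∀ n, ∀ x ∈ V n, x ∈ S.domain := by
    intro n x hx
    have hxT : x ∈ T.domain := hTmem hx
    have hxTc : x ∈ T.closure.domain := T.le_closure.1 hxT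
    have hTcval : T.closure ⟨x, hxTc⟩ = C n x := by
      rw [← T.le_closure.2 (show ((⟨x, hxT⟩ : T.domain) : H) = ((⟨x, hxTc⟩ : T.closure.domain) : H) from rfl)]
      exact hT n x hx hxT
    refine (hSdom x).2 ⟨hxTc, ?_⟩
    rw [hTcval]
    exact (hadjval n x hx).1
  have hSvalD : ∀ n x (hx : x ∈ V n) (hS : x ∈ S.domain), S ⟨x, hS⟩ = Φ n x := by
    intro n x hx hS
    have hxT : x ∈ T.domain := hTmem hx
    have hxTc : x ∈ T.closure.domain := T.le_closure.1 hxT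
    have hTcval : T.closure ⟨x, hxTc⟩ = C n x := by
      rw [← T.le_closure.2 (show ((⟨x, hxT⟩ : T.domain) : H) = ((⟨x, hxTc⟩ : T.closure.domain) : H) from rfl)]
      exact hT n x hx hxT
    have hym : C n x ∈ T.adjoint.domain := (hadjval n x hx).1
    have hy : T.closure ⟨x, hxTc⟩ ∈ T.adjoint.domain := by rw [hTcval]; exact hym
    rw [hSval x hS hxTc hy]
    have : (⟨T.closure ⟨x, hxTc⟩, hy⟩ : T.adjoint.domain) = ⟨C n x, hym⟩ := Subtype.ext hTcval
    rw [this, (hadjval n x hx).2]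
  -- the restricted operator S₀
  set S₀ : H →ₗ.[ℂ] H := S.domRestrict (⨆ n, V n) with hS₀def
  have hS₀dom : ∀ x : H, x ∈ S₀.domain ↔ ∃ n, x ∈ V n := by
    intro x
    rw [hS₀def, LinearPMap.domRestrict_domain, Submodule.mem_inf]
    constructor
    · exact fun h => (hD x).1 h.1
    · rintro ⟨n, hn⟩
      exact ⟨(hD x).2 ⟨n, hn⟩, part1 n x hn⟩
  have hS₀mem : ∀ {n x}, x ∈ V n → x ∈ S₀.domain := fun {n x} hx => (hS₀dom x).2 ⟨n, hx⟩
  have hS₀val : ∀ n x (hx : x ∈ V n) (h : x ∈ S₀.domain), S₀ ⟨x, h⟩ = Φ n x := by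
    intro n x hx h
    have hS : x ∈ S.domain := part1 n x hx
    have : S₀ ⟨x, h⟩ = S ⟨x, hS⟩ :=
      LinearPMap.domRestrict_apply (show ((⟨x, h⟩ : S₀.domain) : H) = ((⟨x, hS⟩ : S.domain) : H) from rfl)
    rw [this, hSvalD n x hx hS]
  have hS₀domT : (S₀.domain : Set H) = (T.domain : Set H) := by
    ext x
    simp only [SetLike.mem_coe, hS₀dom, hTdom]
  have hS₀dense : Dense (S₀.domain : Set H) := by rw [hS₀domT]; exact hdense
  have hlevel : ∀ u : S₀.domain, ∃ n, (u : H) ∈ V n := fun u => (hS₀dom u).1 u.2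
  -- symmetry of S₀
  have hsym : ∀ u w : S₀.domain, ⟪S₀ u, (w : H)⟫ = ⟪(u : H), S₀ w⟫ := by
    intro u w
    obtain ⟨n, hn⟩ := hlevel u
    obtain ⟨m, hm⟩ := hlevel w
    set k := max n m with hk
    have hun : (u : H) ∈ V k := hmono n k (le_max_left n m) hn
    have hwn : (w : H) ∈ V k := hmono m k (le_max_right n m) hm
    rw [hS₀val k u hun u.2, hS₀val k w hwn w.2, hΦpair]
  -- closability of S₀
  have hS₀closable : S₀.IsClosable := by
    refine aux_isClosable hS₀dense fun y hy => ⟨S₀ ⟨y, hy⟩, fun x => ?_⟩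
    exact hsym x ⟨y, hy⟩
  -- the linear map Ψ : S₀.domain →ₗ H, restriction of T
  have hdomle : S₀.domain ≤ T.domain := by
    intro x hx
    exact (hTdom x).2 ((hS₀dom x).1 hx)
  set ι : S₀.domain →ₗ[ℂ] T.domain := Submodule.inclusion hdomle with hιdef
  set Ψ : S₀.domain →ₗ[ℂ] H := T.toFun.comp ι with hΨdef
  have hΨval : ∀ (u : S₀.domain) {n}, (u : H) ∈ V n → Ψ u = C n (u : H) := by
    intro u n hn
    have : Ψ u = T ⟨(u : H), hdomle u.2⟩ := rfl
    rw [this, hT n _ hn _]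
  have hΨT : ∀ (u : S₀.domain), Ψ u = T ⟨(u : H), hdomle u.2⟩ := fun u => rfl
  -- the key identity ⟪Ψ u, Ψ w⟫ = ⟪u, -2 • S₀ w⟫
  have hneg2 : ∀ (z : H), (-2 : ℂ) • ((-(1 / 2 : ℂ)) • z) = z := by
    intro z
    rw [smul_smul]
    norm_num
  have hψkey : ∀ u w : S₀.domain, ⟪Ψ u, Ψ w⟫ = ⟪(u : H), (-2 : ℂ) • S₀ w⟫ := by
    intro u w
    obtain ⟨n, hn⟩ := hlevel u
    obtain ⟨m, hm⟩ := hlevel w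
    set k := max n m with hk
    have hun : (u : H) ∈ V k := hmono n k (le_max_left n m) hn
    have hwn : (w : H) ∈ V k := hmono m k (le_max_right n m) hm
    rw [hΨval u hun, hΨval w hwn, hS₀val k w hwn w.2]
    show ⟪C k (u : H), C k (w : H)⟫ = ⟪(u : H), (-2 : ℂ) • ((-(1 / 2 : ℂ)) • (C' k (C k (w : H))))⟫
    rw [hneg2, hCC']
  have hψkey' : ∀ u w : S₀.domain, ⟪Ψ u, Ψ w⟫ = ⟪(-2 : ℂ) • S₀ u, (w : H)⟫ := by
    intro u w
    rw [← inner_conj_symm, hψkey w u, inner_conj_symm]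
  set B : H →ₗ.[ℂ] H := S₀.closure with hBdef
  -- Step 5 : B ≤ S
  have key5 : ∀ x : B.domain, ∃ hxS : (x : H) ∈ S.domain, S ⟨(x : H), hxS⟩ = B x := by
    intro x
    obtain ⟨v, hv1, hv2⟩ := aux_closure_seq hS₀closable x
    have hnormsq : ∀ u : S₀.domain, ‖Ψ u‖ ^ 2 ≤ ‖(u : H)‖ * (2 * ‖S₀ u‖) := by
      intro u
      have h1 : (‖Ψ u‖ : ℝ) ^ 2 = RCLike.re ⟪Ψ u, Ψ u⟫ := (inner_self_eq_norm_sq (𝕜 := ℂ) _).symm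
      rw [h1, hψkey u u]
      calc RCLike.re ⟪(u : H), (-2 : ℂ) • S₀ u⟫ ≤ ‖(u : H)‖ * ‖(-2 : ℂ) • S₀ u‖ :=
            re_inner_le_norm _ _
        _ = ‖(u : H)‖ * (2 * ‖S₀ u‖) := by rw [norm_smul]; norm_num
    have hcv1 : CauchySeq (fun k => ((v k : H))) := hv1.cauchySeq
    have hcv2 : CauchySeq (fun k => S₀ (v k)) := hv2.cauchySeq
    have hφc : CauchySeq (fun k => Ψ (v k)) := by
      rw [Metric.cauchySeq_iff]
      intro ε hε
      obtain ⟨N1, hN1⟩ := Metric.cauchySeq_iff.mp hcv1 (ε / 2) (by positivity)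
      obtain ⟨N2, hN2⟩ := Metric.cauchySeq_iff.mp hcv2 (ε / 4) (by positivity)
      refine ⟨max N1 N2, fun a ha b hb => ?_⟩
      have h1 := hN1 a (le_trans (le_max_left _ _) ha) b (le_trans (le_max_left _ _) hb)
      have h2 := hN2 a (le_trans (le_max_right _ _) ha) b (le_trans (le_max_right _ _) hb)
      rw [dist_eq_norm] at h1 h2 ⊢
      have hd : Ψ (v a) - Ψ (v b) = Ψ (v a - v b) := (map_sub Ψ _ _).symm
      have hsq := hnormsq (v a - v b)
      have e1 : ((v a - v b : S₀.domain) : H) = (v a : H) - (v b : H) :=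
        AddSubgroupClass.coe_sub _ _
      have e2 : S₀ (v a - v b) = S₀ (v a) - S₀ (v b) := S₀.map_sub _ _
      rw [e1, e2] at hsq
      have hn1 : ‖(v a : H) - (v b : H)‖ < ε / 2 := h1
      have hn2 : ‖S₀ (v a) - S₀ (v b)‖ < ε / 4 := h2
      have hpow : ‖Ψ (v a) - Ψ (v b)‖ ^ 2 < ε ^ 2 := by
        rw [hd]
        nlinarith [norm_nonneg ((v a : H) - (v b : H)), norm_nonneg (S₀ (v a) - S₀ (v b)),
          norm_nonneg (Ψ (v a - v b))]
      exact lt_of_pow_lt_pow_left₀ 2 (le_of_lt hε) hpow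
    obtain ⟨y, hy⟩ := cauchySeq_tendsto_of_complete hφc
    have hxcpair := aux_mem_closure hTclosable (fun k => ι (v k))
      (by simpa [hιdef] using hv1) (by simpa [hΨdef] using hy)
    obtain ⟨hxc, hxcval⟩ := hxcpair
    have hx₀key : ∀ z : T.domain, ⟪(-2 : ℂ) • B x, (z : H)⟫ = ⟪y, T z⟫ := by
      intro z
      obtain ⟨m, hzm⟩ := (hTdom (z : H)).1 z.2
      set z' : S₀.domain := ⟨(z : H), hS₀mem hzm⟩ with hz'def
      have hTz : T z = Ψ z' := by
        rw [hΨT z']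
      have l1 : Tendsto (fun k => ⟪Ψ (v k), Ψ z'⟫) atTop (𝓝 ⟪y, Ψ z'⟫) :=
        hy.inner tendsto_const_nhds
      have l2 : (fun k => ⟪Ψ (v k), Ψ z'⟫) = fun k => ⟪(-2 : ℂ) • S₀ (v k), (z : H)⟫ :=
        funext fun k => hψkey' (v k) z'
      have l3 : Tendsto (fun k => ⟪(-2 : ℂ) • S₀ (v k), (z : H)⟫) atTop
          (𝓝 ⟪(-2 : ℂ) • B x, (z : H)⟫) :=
        (hv2.const_smul _).inner tendsto_const_nhds
      rw [l2] at l1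
      rw [hTz, tendsto_nhds_unique l3 l1]
    have hymem : y ∈ T.adjoint.domain :=
      LinearPMap.mem_adjoint_domain_of_exists y ⟨(-2 : ℂ) • B x, hx₀key⟩
    have hyval : T.adjoint ⟨y, hymem⟩ = (-2 : ℂ) • B x :=
      LinearPMap.adjoint_apply_eq hdense ⟨y, hymem⟩ hx₀key
    have hymem' : T.closure ⟨(x : H), hxc⟩ ∈ T.adjoint.domain := by rw [hxcval]; exact hymem
    have hxS : (x : H) ∈ S.domain := (hSdom _).2 ⟨hxc, hymem'⟩
    refine ⟨hxS, ?_⟩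
    rw [hSval (x : H) hxS hxc hymem']
    have : (⟨T.closure ⟨(x : H), hxc⟩, hymem'⟩ : T.adjoint.domain) = ⟨y, hymem⟩ :=
      Subtype.ext hxcval
    rw [this, hyval, smul_smul]
    norm_num
  have hBS : B ≤ S := by
    refine ⟨fun a ha => (key5 ⟨a, ha⟩).1, fun a b hab => ?_⟩
    obtain ⟨hS', hval⟩ := key5 a
    have hb : b = ⟨(a : H), hS'⟩ := Subtype.ext hab.symm
    rw [hb, hval]
  -- Step 6 : S ≤ B
  have hnorm : ∀ u : S₀.domain, ‖(u : H)‖ ≤ ‖(u : H) - S₀ u‖ := by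
    intro u
    have hre : RCLike.re ⟪S₀ u, (u : H)⟫ ≤ 0 := by
      have h1 := hψkey' u u
      have h2 : RCLike.re ⟪Ψ u, Ψ u⟫ = ‖Ψ u‖ ^ 2 := inner_self_eq_norm_sq (𝕜 := ℂ) _
      have h3 : ⟪(-2 : ℂ) • S₀ u, (u : H)⟫ = (-2 : ℂ) * ⟪S₀ u, (u : H)⟫ := by
        rw [inner_smul_left]
        congr 1
        rw [map_neg, map_ofNat]
      have h4 : RCLike.re ⟪Ψ u, Ψ u⟫ = -2 * RCLike.re ⟪S₀ u, (u : H)⟫ := by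
        rw [h1, h3, RCLike.mul_re]
        have hre2 : RCLike.re (-2 : ℂ) = -2 := by norm_num
        have him2 : RCLike.im (-2 : ℂ) = 0 := by norm_num
        rw [hre2, him2]
        ring
      nlinarith [sq_nonneg (‖Ψ u‖)]
    have e2 : RCLike.re ⟪(u : H), (u : H)⟫ = ‖(u : H)‖ ^ 2 := inner_self_eq_norm_sq (𝕜 := ℂ) _
    have e : RCLike.re ⟪(u : H) - S₀ u, (u : H)⟫
        = RCLike.re ⟪(u : H), (u : H)⟫ - RCLike.re ⟪S₀ u, (u : H)⟫ := by
      rw [inner_sub_left, map_sub]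
    have e3 := re_inner_le_norm (𝕜 := ℂ) ((u : H) - S₀ u) (u : H)
    have hmain : ‖(u : H)‖ * ‖(u : H)‖ ≤ ‖(u : H) - S₀ u‖ * ‖(u : H)‖ := by nlinarith
    rcases eq_or_lt_of_le (norm_nonneg ((u : H))) with h0 | h0
    · rw [← h0]
      exact norm_nonneg _
    · exact le_of_mul_le_mul_right hmain h0
  -- solving (1 - S₀) u = x on each V n
  have hsolve : ∀ n, ∀ x ∈ V n, ∃ u : S₀.domain, (u : H) - S₀ u = x := by
    intro n x hx
    haveI := hfin n
    set G : H →ₗ[ℂ] H := (-(1 / 2 : ℂ)) • ((C' n).toLinearMap ∘ₗ (C n).toLinearMap) with hGdef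
    have hGval : ∀ z, G z = Φ n z := fun z => rfl
    have hGmem : ∀ z ∈ V n, G z ∈ V n := fun z hz => by rw [hGval]; exact hΦmem n z hz
    set g : V n →ₗ[ℂ] V n := G.restrict hGmem with hgdef
    set f : V n →ₗ[ℂ] V n := LinearMap.id - g with hfdef
    have hfval : ∀ a : V n, ((f a : V n) : H) = (a : H) - Φ n (a : H) := by
      intro a
      simp [hfdef, hgdef, LinearMap.restrict_apply, hGval]
    have hker : ∀ a : V n, f a = 0 → a = 0 := by
      intro a ha
      have hcoe : (a : H) - Φ n (a : H) = 0 := by rw [← hfval, ha]; rfl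
      have hSu : S₀ ⟨(a : H), hS₀mem a.2⟩ = Φ n (a : H) := hS₀val n _ a.2 _
      have h0 : ‖(a : H)‖ ≤ 0 := by
        have hn := hnorm ⟨(a : H), hS₀mem a.2⟩
        rw [hSu] at hn
        calc ‖(a : H)‖ ≤ ‖(a : H) - Φ n (a : H)‖ := hn
          _ = 0 := by rw [hcoe, norm_zero]
      exact Subtype.ext (norm_le_zero_iff.mp h0)
    have hinj : Function.Injective f := (injective_iff_map_eq_zero f).mpr hker
    obtain ⟨a, ha⟩ := (LinearMap.injective_iff_surjective.mp hinj) ⟨x, hx⟩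
    refine ⟨⟨(a : H), hS₀mem a.2⟩, ?_⟩
    have hSu : S₀ ⟨(a : H), hS₀mem a.2⟩ = Φ n (a : H) := hS₀val n _ a.2 _
    have heq : ((f a : V n) : H) = ((⟨x, hx⟩ : V n) : H) := by rw [ha]
    rw [hfval] at heq
    show (a : H) - S₀ ⟨(a : H), hS₀mem a.2⟩ = x
    rw [hSu, heq]
  -- surjectivity of 1 - B
  have hsurjB : ∀ w : H, ∃ z : B.domain, (z : H) - B z = w := by
    intro w
    obtain ⟨w', hw'mem, hw'lim⟩ := mem_closure_iff_seq_limit.mp (hS₀dense w)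
    have hex : ∀ k, ∃ u : S₀.domain, (u : H) - S₀ u = w' k := by
      intro k
      obtain ⟨n, hn⟩ := (hS₀dom (w' k)).1 (hw'mem k)
      exact hsolve n _ hn
    choose u hu using hex
    have hdiff : ∀ a b : ℕ, ‖(u a : H) - (u b : H)‖ ≤ ‖w' a - w' b‖ := by
      intro a b
      have h := hnorm (u a - u b)
      have e1 : ((u a - u b : S₀.domain) : H) = (u a : H) - (u b : H) :=
        AddSubgroupClass.coe_sub _ _
      have e2 : S₀ (u a - u b) = S₀ (u a) - S₀ (u b) := S₀.map_sub _ _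
      rw [e1, e2] at h
      calc ‖(u a : H) - (u b : H)‖
          ≤ ‖(u a : H) - (u b : H) - (S₀ (u a) - S₀ (u b))‖ := h
        _ = ‖((u a : H) - S₀ (u a)) - ((u b : H) - S₀ (u b))‖ := by rw [sub_sub_sub_comm]
        _ = ‖w' a - w' b‖ := by rw [hu a, hu b]
    have hcu : CauchySeq (fun k => (u k : H)) := by
      rw [Metric.cauchySeq_iff]
      intro ε hε
      obtain ⟨N, hN⟩ := Metric.cauchySeq_iff.mp hw'lim.cauchySeq ε hε
      refine ⟨N, fun a ha b hb => ?_⟩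
      have h := hN a ha b hb
      rw [dist_eq_norm] at h ⊢
      exact lt_of_le_of_lt (hdiff a b) h
    obtain ⟨z, hz⟩ := cauchySeq_tendsto_of_complete hcu
    have hS₀lim : Tendsto (fun k => S₀ (u k)) atTop (𝓝 (z - w)) := by
      have heq : (fun k => S₀ (u k)) = fun k => (u k : H) - w' k := by
        funext k
        rw [← hu k, sub_sub_cancel]
      rw [heq]
      exact hz.sub hw'lim
    obtain ⟨hzB, hBv⟩ := aux_mem_closure hS₀closable u hz hS₀lim
    refine ⟨⟨z, hzB⟩, ?_⟩
    show z - B ⟨z, hzB⟩ = w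
    rw [hBv, sub_sub_cancel]
  -- symmetry pairing for B and S
  have hBpair : ∀ (z : B.domain) (u : S₀.domain), ⟪B z, (u : H)⟫ = ⟪(z : H), S₀ u⟫ := by
    intro z u
    obtain ⟨v, hv1, hv2⟩ := aux_closure_seq hS₀closable z
    have l1 : Tendsto (fun k => ⟪S₀ (v k), (u : H)⟫) atTop (𝓝 ⟪B z, (u : H)⟫) :=
      hv2.inner tendsto_const_nhds
    have l2 : Tendsto (fun k => ⟪S₀ (v k), (u : H)⟫) atTop (𝓝 ⟪(z : H), S₀ u⟫) := by
      have heq : (fun k => ⟪S₀ (v k), (u : H)⟫) = fun k => ⟪((v k : H)), S₀ u⟫ :=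
        funext fun k => hsym (v k) u
      rw [heq]
      exact hv1.inner tendsto_const_nhds
    exact tendsto_nhds_unique l1 l2
  have hSpair : ∀ (x : S.domain) (u : S₀.domain), ⟪S x, (u : H)⟫ = ⟪(x : H), S₀ u⟫ := by
    intro x u
    obtain ⟨hxc, hyc⟩ := (hSdom (x : H)).1 x.2
    have hvalS : S x = (-(1 / 2 : ℂ)) • T.adjoint ⟨T.closure ⟨(x : H), hxc⟩, hyc⟩ := by
      have h := hSval (x : H) x.2 hxc hyc
      simpa using h
    obtain ⟨n, hn⟩ := hlevel u
    have hS₀u : S₀ u = Φ n (u : H) := hS₀val n _ hn u.2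
    have hfa := LinearPMap.adjoint_isFormalAdjoint hdense
      ⟨T.closure ⟨(x : H), hxc⟩, hyc⟩ ⟨(u : H), hTmem hn⟩
    have hTu : T ⟨(u : H), hTmem hn⟩ = C n (u : H) := hT n _ hn _
    have hlim : ⟪(x : H), C' n (C n (u : H))⟫ = ⟪T.closure ⟨(x : H), hxc⟩, C n (u : H)⟫ := by
      obtain ⟨xv, hxv1, hxv2⟩ := aux_closure_seq hTclosable ⟨(x : H), hxc⟩
      have hstep : ∀ k, ⟪((xv k : H)), C' n (C n (u : H))⟫ = ⟪T (xv k), C n (u : H)⟫ := by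
        intro k
        obtain ⟨a, ha⟩ := (hTdom _).1 (xv k).2
        have hTx : T (xv k) = C (max a n) ((xv k : H)) := by
          rw [hT a _ ha (xv k).2, hCcomp a (max a n) (le_max_left a n) _ ha]
        have hcm : C n (u : H) ∈ V n := hCinv n _ hn
        rw [hTx, ← hC'comp n (max a n) (le_max_right a n) _ hcm, hCC']
      have l1 : Tendsto (fun k => ⟪((xv k : H)), C' n (C n (u : H))⟫) atTop
          (𝓝 ⟪(x : H), C' n (C n (u : H))⟫) := hxv1.inner tendsto_const_nhds
      have l2 : Tendsto (fun k => ⟪((xv k : H)), C' n (C n (u : H))⟫) atTop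
          (𝓝 ⟪T.closure ⟨(x : H), hxc⟩, C n (u : H)⟫) := by
        have heq := funext hstep
        rw [heq]
        exact hxv2.inner tendsto_const_nhds
      exact tendsto_nhds_unique l1 l2
    rw [hvalS, hS₀u, inner_smul_left, hconj]
    rw [hfa, hTu]
    show (-(1 / 2 : ℂ)) * ⟪T.closure ⟨(x : H), hxc⟩, C n (u : H)⟫
      = ⟪(x : H), (-(1 / 2 : ℂ)) • (C' n (C n (u : H)))⟫
    rw [inner_smul_right, hlim]
  -- S ≤ B
  have key6 : ∀ x : S.domain, ∃ hxB : (x : H) ∈ B.domain, B ⟨(x : H), hxB⟩ = S x := by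
    intro x
    obtain ⟨z, hz⟩ := hsurjB ((x : H) - S x)
    have horto : ∀ u : S₀.domain, ⟪(x : H) - (z : H), (u : H) - S₀ u⟫ = 0 := by
      intro u
      have e : ⟪(x : H) - (z : H), (u : H) - S₀ u⟫
          = (⟪(x : H), (u : H)⟫ - ⟪(x : H), S₀ u⟫) - (⟪(z : H), (u : H)⟫ - ⟪(z : H), S₀ u⟫) := by
        rw [inner_sub_left, inner_sub_right, inner_sub_right]
      rw [e, ← hSpair x u, ← hBpair z u]
      have e2 : (⟪(x : H), (u : H)⟫ - ⟪S x, (u : H)⟫) - (⟪(z : H), (u : H)⟫ - ⟪B z, (u : H)⟫)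
          = ⟪((x : H) - S x) - ((z : H) - B z), (u : H)⟫ := by
        rw [inner_sub_left, inner_sub_left, inner_sub_left]
      rw [e2, hz, sub_self, inner_zero_left]
    have hxz : (x : H) = (z : H) := by
      have h0 : (x : H) - (z : H) = 0 := by
        refine aux_eq_zero hdense fun d hd => ?_
        obtain ⟨n, hn⟩ := (hTdom d).1 hd
        obtain ⟨u, hu⟩ := hsolve n d hn
        rw [← hu]
        exact horto u
      exact sub_eq_zero.mp h0
    have hxB : (x : H) ∈ B.domain := hxz ▸ z.2
    refine ⟨hxB, ?_⟩
    have hzz : (⟨(x : H), hxB⟩ : B.domain) = z := Subtype.ext hxz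
    rw [hzz]
    have h := hz
    rw [← hxz] at h
    exact sub_right_injective h
  have hSB : S ≤ B := by
    refine ⟨fun a ha => (key6 ⟨a, ha⟩).1, fun a b hab => ?_⟩
    obtain ⟨hB', hval⟩ := key6 a
    have hb : b = ⟨(a : H), hB'⟩ := Subtype.ext hab.symm
    rw [hb, hval]
  exact ⟨part1, le_antisymm hBS hSB⟩
end

section
/- Under the Setup, fix n and x ∈ V_n, let G_n := -(1/2) C'_n C_n (a bounded operator on H) and define u(t) := exp(t G_n) x for t ≥ 0, where exp denotes the exponential of a bounded operator. Then for every t ≥ 0: u(t) ∈ V_n, u(t) ∈ Dom(C* C̄), the map t ↦ u(t) is differentiable in H with derivative u'(t) = -(1/2) C* C̄ u(t), and u(0) = x. -/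
/-- Same setup as Statement 1 (in particular `T` is the densely defined operator `C`, with closure
`C̄ = T.closure` and adjoint `C* = T.adjoint`).  Fix `n` and `x ∈ V n`, let
`G_n := -(1/2) C'_n C_n` (a bounded operator on `H`) and define `u t := exp (t G_n) x` for
`t ≥ 0`, where `exp` denotes the exponential of a bounded operator.  Then for every `t ≥ 0`:
`u t ∈ V n`, `u t ∈ Dom(C* C̄)`, the map `t ↦ u t` is differentiable in `H` with derivative
`u' t = -(1/2) C* C̄ (u t)`, and `u 0 = x`. -/
theorem stmt_4
    {H : Type*} [NormedAddCommGroup H] [InnerProductSpace ℂ H] [CompleteSpace H]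
    (V : ℕ → Submodule ℂ H)
    (hfin : ∀ n, FiniteDimensional ℂ (V n))
    (hmono : ∀ m n, m ≤ n → V m ≤ V n)
    (C : ℕ → H →L[ℂ] H)
    (hCinv : ∀ n, ∀ x ∈ V n, C n x ∈ V n)
    (hCcomp : ∀ p m, p ≤ m → ∀ x ∈ V p, C m x = C p x)
    (C' : ℕ → H →L[ℂ] H)
    (hC'inv : ∀ n, ∀ x ∈ V n, C' n x ∈ V n)
    (hC'comp : ∀ p m, p ≤ m → ∀ x ∈ V p, C' m x = C' p x)
    (hadj : ∀ n, C' n = ContinuousLinearMap.adjoint (C n))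
    (T : H →ₗ.[ℂ] H)
    (hTdom : ∀ x : H, x ∈ T.domain ↔ ∃ n, x ∈ V n)
    (hdense : Dense (T.domain : Set H))
    (hT : ∀ n, ∀ x ∈ V n, ∀ hx : x ∈ T.domain, T ⟨x, hx⟩ = C n x)
    (n : ℕ) (x : H) (hx : x ∈ V n)
    -- `G_n := -(1/2) C'_n C_n` and `u t := exp (t G_n) x`
    (Gn : H →L[ℂ] H) (hGn : Gn = (-(1 / 2 : ℂ)) • ((C' n).comp (C n)))
    (u : ℝ → H) (hu : ∀ t : ℝ, u t = NormedSpace.exp ((t : ℂ) • Gn) x) :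
    (∀ t : ℝ, 0 ≤ t →
      u t ∈ V n ∧
      ∃ (h1 : u t ∈ T.closure.domain)
        (h2 : T.closure ⟨u t, h1⟩ ∈ T.adjoint.domain),
        HasDerivAt u ((-(1 / 2 : ℂ)) • T.adjoint ⟨T.closure ⟨u t, h1⟩, h2⟩) t) ∧
    u 0 = x := by
  classical
  haveI := hfin n
  have hVcl : IsClosed (V n : Set H) := Submodule.closed_of_finiteDimensional (V n)
  have hGnV : ∀ y ∈ V n, Gn y ∈ V n := by
    intro y hy
    rw [hGn]
    simpa using (V n).smul_mem (-(1 / 2 : ℂ)) (hC'inv n _ (hCinv n y hy))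
  -- real smul vs complex smul
  have hsmul : ∀ s : ℝ, (s : ℂ) • Gn = s • Gn := by
    intro s
    rw [show ((s : ℂ)) = algebraMap ℝ ℂ s from rfl, algebraMap_smul]
  -- `u t ∈ V n`
  have huV : ∀ t : ℝ, u t ∈ V n := by
    intro t
    rw [hu t]
    set A : H →L[ℂ] H := (t : ℂ) • Gn with hA
    have hpow : ∀ k : ℕ, (A ^ k) x ∈ V n := by
      intro k
      induction k with
      | zero => simpa using hx
      | succ k ih =>
        rw [pow_succ']
        exact (V n).smul_mem _ (hGnV _ ih)
    have hs : Summable fun k : ℕ => (((Nat.factorial k : ℂ))⁻¹) • A ^ k :=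
      NormedSpace.expSeries_summable' (𝕂 := ℂ) A
    have h1 : HasSum (fun k : ℕ => (((Nat.factorial k : ℂ))⁻¹) • A ^ k) (NormedSpace.exp A) := by
      rw [NormedSpace.exp_eq_tsum ℂ]
      exact hs.hasSum
    have hsum : HasSum (fun k : ℕ => (((Nat.factorial k : ℂ))⁻¹) • (A ^ k) x) (NormedSpace.exp A x) := by
      have := h1.mapL (ContinuousLinearMap.apply ℂ H x)
      simpa using this
    refine hVcl.mem_of_tendsto hsum.tendsto_sum_nat (Filter.Eventually.of_forall ?_)
    intro m
    exact Submodule.sum_mem _ fun k _ => (V n).smul_mem _ (hpow k)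
  -- domain membership
  have hdomV : ∀ (m : ℕ) (y : H), y ∈ V m → y ∈ T.domain := fun m y hy => (hTdom y).2 ⟨m, hy⟩
  -- adjoint facts
  have hadjoint : ∀ y, y ∈ V n → ∃ hy : y ∈ T.adjoint.domain,
      T.adjoint ⟨y, hy⟩ = C' n y := by
    intro y hy
    have key : ∀ w : T.domain, (inner ℂ (C' n y) ((w : H)) : ℂ) = inner ℂ y (T w) := by
      intro w
      obtain ⟨m, hm⟩ := (hTdom (w : H)).1 w.2
      have hwp : (w : H) ∈ V (max m n) := hmono m _ (le_max_left _ _) hm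
      have hyp : y ∈ V (max m n) := hmono n _ (le_max_right _ _) hy
      have h1 : T w = C (max m n) w := by
        rw [show (w : T.domain) = ⟨(w : H), w.2⟩ from rfl, hT m (w : H) hm w.2,
          ← hCcomp m _ (le_max_left _ _) (w : H) hm]
      rw [h1, ← hC'comp n _ (le_max_right _ _) y hy, hadj (max m n)]
      exact ContinuousLinearMap.adjoint_inner_left (C (max m n)) (w : H) y
    have hmem := LinearPMap.mem_adjoint_domain_of_exists y ⟨C' n y, key⟩
    exact ⟨hmem, LinearPMap.adjoint_apply_eq hdense ⟨y, hmem⟩ key⟩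
  refine ⟨fun t _ht => ?_, ?_⟩
  · have hVt := huV t
    refine ⟨hVt, ?_⟩
    have hdomt : u t ∈ T.domain := hdomV n _ hVt
    have h1 : u t ∈ T.closure.domain := T.le_closure.1 hdomt
    have hcl : T.closure ⟨u t, h1⟩ = T ⟨u t, hdomt⟩ := (T.le_closure.2 rfl).symm
    have hTval : T.closure ⟨u t, h1⟩ = C n (u t) := by rw [hcl, hT n _ hVt]
    have hCV : C n (u t) ∈ V n := hCinv n _ hVt
    obtain ⟨h2', hadjval⟩ := hadjoint _ hCV
    have h2 : T.closure ⟨u t, h1⟩ ∈ T.adjoint.domain := hTval ▸ h2'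
    refine ⟨h1, h2, ?_⟩
    have heq : (⟨T.closure ⟨u t, h1⟩, h2⟩ : T.adjoint.domain) = ⟨C n (u t), h2'⟩ :=
      Subtype.ext hTval
    have hval : (-(1 / 2 : ℂ)) • T.adjoint ⟨T.closure ⟨u t, h1⟩, h2⟩ = Gn (u t) := by
      rw [heq, hadjval, hGn]
      rfl
    rw [hval]
    -- derivative of the exponential
    have hd : HasDerivAt (fun s : ℝ => NormedSpace.exp ((s : ℂ) • Gn))
        (Gn * NormedSpace.exp ((t : ℂ) • Gn)) t := by
      have h := hasDerivAt_exp_smul_const' (𝕂 := ℝ) Gn t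
      simpa only [hsmul] using h
    have hfd := ((ContinuousLinearMap.apply ℂ H x).restrictScalars
        ℝ).hasFDerivAt.comp_hasDerivAt t hd
    have hfd' : HasDerivAt (fun s : ℝ => NormedSpace.exp ((s : ℂ) • Gn) x)
        (Gn (NormedSpace.exp ((t : ℂ) • Gn) x)) t := by
      simpa [Function.comp_def] using hfd
    have huf : u = fun s : ℝ => NormedSpace.exp ((s : ℂ) • Gn) x := funext hu
    rw [huf]
    simpa using hfd'
  · rw [hu 0]
    simp
end
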